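/- The matrix H − B is positive semidefinite; that is, for every vector z ∈ ℝⁿ, zᵀ(H − B)z ≥ 0. -/

import Mathlib

open Matrix
/-- The matrix H − B is positive semidefinite: for every z ∈ ℝⁿ, zᵀ(H − B)z ≥ 0.
Here coordinates are indexed by pairs (i, s) with i a class and s an index within
class i; K is a p.s.d. kernel matrix, H is the diagonal of K, and B is the
block-diagonal matrix whose i-th diagonal block is the i-th diagonal block
of K divided by the class size n_i. -/
theorem H_sub_B_posSemidef
    (g : ℕ) (hg : 1 ≤ g) (nc : Fin g → ℕ) (hnc : ∀ i, 1 ≤ nc i)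
    (K : Matrix ((i : Fin g) × Fin (nc i)) ((i : Fin g) × Fin (nc i)) ℝ)
    (hK : K.PosSemidef)
    (H B : Matrix ((i : Fin g) × Fin (nc i)) ((i : Fin g) × Fin (nc i)) ℝ)
    (hH : H = Matrix.diagonal fun q => K q q)
    (hB : ∀ q r, B q r = if q.1 = r.1 then K q r / (nc q.1 : ℝ) else 0)
    (z : (i : Fin g) × Fin (nc i) → ℝ) :
    0 ≤ z ⬝ᵥ (H - B).mulVec z := by
  have hsig : ∀ (f : ((i : Fin g) × Fin (nc i)) → ℝ),
      ∑ q : (i : Fin g) × Fin (nc i), f q = ∑ i : Fin g, ∑ s : Fin (nc i), f ⟨i,s⟩ := by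
    intro f
    rw [← Finset.univ_sigma_univ, Finset.sum_sigma]
  have key : ∀ q r, 2 * (z q * K q r * z r) ≤ z q^2 * K q q + z r^2 * K r r := by
    intro q r
    have h := hK.dotProduct_mulVec_nonneg (fun x => z q * (if x = q then (1:ℝ) else 0)
      - z r * (if x = r then (1:ℝ) else 0))
    have hs : K q r = K r q := by
      have := hK.1.apply q r; simpa using this.symm
    simp only [star_trivial, dotProduct, mulVec, mul_ite, mul_one, mul_zero,
      sub_mul, mul_sub, ite_mul, zero_mul, Finset.sum_sub_distrib, Finset.sum_ite_eq',
      Finset.mem_univ, if_true, dotProduct] at h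
    rw [← hs] at h; ring_nf at h ⊢; linarith
  rw [sub_mulVec, dotProduct_sub, sub_nonneg]
  have hHz : z ⬝ᵥ H.mulVec z
      = ∑ i : Fin g, ∑ s : Fin (nc i), z ⟨i,s⟩^2 * K ⟨i,s⟩ ⟨i,s⟩ := by
    rw [hH, show (∑ i : Fin g, ∑ s : Fin (nc i), z ⟨i,s⟩^2 * K ⟨i,s⟩ ⟨i,s⟩)
      = ∑ q : (i : Fin g) × Fin (nc i), z q^2 * K q q from
        (hsig fun q => z q^2 * K q q).symm]
    simp [dotProduct, mulVec_diagonal]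
    ring_nf
  have hBz : z ⬝ᵥ B.mulVec z
      = ∑ i : Fin g, (∑ s : Fin (nc i), ∑ t : Fin (nc i),
          z ⟨i,s⟩ * K ⟨i,s⟩ ⟨i,t⟩ * z ⟨i,t⟩) / (nc i : ℝ) := by
    rw [show z ⬝ᵥ B.mulVec z = ∑ q : (i : Fin g) × Fin (nc i),
        z q * ∑ r : (i : Fin g) × Fin (nc i), B q r * z r from rfl]
    rw [hsig]
    refine Finset.sum_congr rfl fun i _ => ?_
    rw [Finset.sum_div]
    refine Finset.sum_congr rfl fun s _ => ?_
    rw [hsig fun r => B ⟨i,s⟩ r * z r]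
    simp only [hB]
    rw [Finset.sum_eq_single i]
    · rw [Finset.mul_sum, Finset.sum_div]
      refine Finset.sum_congr rfl fun t _ => ?_
      simp; ring
    · intro j _ hj
      simp [hj.symm]
    · simp
  rw [hHz, hBz]
  refine Finset.sum_le_sum fun i _ => ?_
  have hn : (0:ℝ) < (nc i : ℝ) := by exact_mod_cast hnc i
  rw [div_le_iff₀ hn, mul_comm]
  have h2 : ∑ s : Fin (nc i), ∑ t : Fin (nc i), 2 * (z ⟨i,s⟩ * K ⟨i,s⟩ ⟨i,t⟩ * z ⟨i,t⟩)
      ≤ ∑ s : Fin (nc i), ∑ t : Fin (nc i),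
        (z ⟨i,s⟩^2 * K ⟨i,s⟩ ⟨i,s⟩ + z ⟨i,t⟩^2 * K ⟨i,t⟩ ⟨i,t⟩) :=
    Finset.sum_le_sum fun s _ => Finset.sum_le_sum fun t _ => key _ _
  have hS : ∀ s : Fin (nc i), ∑ t : Fin (nc i),
        (z ⟨i,s⟩^2 * K ⟨i,s⟩ ⟨i,s⟩ + z ⟨i,t⟩^2 * K ⟨i,t⟩ ⟨i,t⟩)
      = (nc i : ℝ) * (z ⟨i,s⟩^2 * K ⟨i,s⟩ ⟨i,s⟩)
        + ∑ t : Fin (nc i), z ⟨i,t⟩^2 * K ⟨i,t⟩ ⟨i,t⟩ := by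
    intro s
    rw [Finset.sum_add_distrib, Finset.sum_const, Finset.card_univ]
    simp [nsmul_eq_mul]
  have hrhs : ∑ s : Fin (nc i), ∑ t : Fin (nc i),
        (z ⟨i,s⟩^2 * K ⟨i,s⟩ ⟨i,s⟩ + z ⟨i,t⟩^2 * K ⟨i,t⟩ ⟨i,t⟩)
      = 2 * ((nc i : ℝ) * ∑ s : Fin (nc i), z ⟨i,s⟩^2 * K ⟨i,s⟩ ⟨i,s⟩) := by
    simp only [hS, Finset.sum_add_distrib, Finset.sum_const, Finset.card_univ,
      Fintype.card_fin, nsmul_eq_mul, ← Finset.mul_sum]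
    ring
  rw [hrhs] at h2
  simp only [← Finset.mul_sum] at h2
  linarith
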